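/- arXiv:2002.04466 — 2 statements merged into one kernel-verified Lean document; each statement's English description precedes it below -/
import Mathlib

section
/- Let (R, P) be a Rota-Baxter algebra of weight 0 and b_0 ∈ k. Define P̃ : R^ℕ → R^ℕ recursively by P̃(f)_0 = P(f_0) and P̃(f)_{n+1} = b_0 P̃(f)_n + P̃(∂f)_n, where ∂(f)_m = f_{m+1}. Then P̃ is a Rota-Baxter operator of weight 0 on the weight-0 Hurwitz series algebra R^ℕ, and satisfies ∂P̃ = b_0 P̃ + P̃∂. -/
open Finset

/-- The weight-0 Hurwitz product on sequences. -/
def hmul0 {R : Type*} [CommRing R] (f g : ℕ → R) : ℕ → R :=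
  fun n => ∑ j ∈ range (n + 1), n.choose j • (f (n - j) * g j)

/-- The shift operator ∂(f)_n = f_{n+1}. -/
def der {R : Type*} (f : ℕ → R) : ℕ → R := fun n => f (n + 1)

/-- The cover of P determined by P̃(f)_0 = P(f_0) and
P̃(f)_{n+1} = b_0 P̃(f)_n + P̃(∂f)_n. -/
def covAux {K R : Type*} [CommRing K] [CommRing R] [Algebra K R]
    (P : R → R) (b0 : K) : ℕ → (ℕ → R) → R
  | 0, f => P (f 0)
  | n + 1, f => b0 • covAux P b0 n f + covAux P b0 n (der f)

section Aux
variable {K R : Type*} [CommRing K] [CommRing R] [Algebra K R]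

lemma hmul0_leibniz (f g : ℕ → R) (n : ℕ) :
    hmul0 f g (n + 1) = hmul0 (der f) g n + hmul0 f (der g) n := by
  unfold hmul0 der
  rw [Finset.sum_range_succ' _ (n + 1)]
  have h1 : ∀ j ∈ range (n + 1), (n+1).choose (j+1) • (f (n + 1 - (j+1)) * g (j+1))
      = n.choose j • (f (n - j) * g (j+1)) + n.choose (j+1) • (f (n - j) * g (j+1)) := by
    intro j hj
    rw [Nat.choose_succ_succ, add_smul]
    congr 2 <;> · congr 2; omega
  rw [Finset.sum_congr rfl h1, Finset.sum_add_distrib]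
  have h2 : ∑ j ∈ range (n+1), n.choose (j+1) • (f (n - j) * g (j+1)) + f (n + 1) * g 0
      = ∑ j ∈ range (n+1), n.choose j • (f (n - j + 1) * g j) := by
    rw [Finset.sum_range_succ' (fun j => n.choose j • (f (n - j + 1) * g j)) n,
        Finset.sum_range_succ (fun j => n.choose (j+1) • (f (n - j) * g (j+1))) n]
    simp only [Nat.choose_succ_self, zero_smul, add_zero, Nat.choose_zero_right, one_smul,
      Nat.sub_zero, Nat.sub_self]
    congr 1
    apply Finset.sum_congr rfl
    intro j hj
    simp only [mem_range] at hj
    congr 3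
    omega
  rw [← h2]
  simp only [Nat.choose_zero_right, one_smul, Nat.sub_zero, Nat.sub_self]
  ring

lemma der_hmul0 (f g : ℕ → R) :
    der (hmul0 f g) = hmul0 (der f) g + hmul0 f (der g) :=
  funext fun n => hmul0_leibniz f g n

lemma hmul0_add_left (f f' g : ℕ → R) : hmul0 (f + f') g = hmul0 f g + hmul0 f' g := by
  funext n
  simp [hmul0, add_mul, smul_add, Finset.sum_add_distrib]

lemma hmul0_add_right (f g g' : ℕ → R) : hmul0 f (g + g') = hmul0 f g + hmul0 f g' := by
  funext n
  simp [hmul0, mul_add, smul_add, Finset.sum_add_distrib]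

lemma hmul0_smul_left (c : K) (f g : ℕ → R) : hmul0 (c • f) g = c • hmul0 f g := by
  funext n
  simp only [hmul0, Pi.smul_apply, smul_mul_assoc, Finset.smul_sum, smul_comm _ c]

lemma hmul0_smul_right (c : K) (f g : ℕ → R) : hmul0 f (c • g) = c • hmul0 f g := by
  funext n
  simp only [hmul0, Pi.smul_apply, mul_smul_comm, Finset.smul_sum, smul_comm _ c]

lemma der_add (f g : ℕ → R) : der (f + g) = der f + der g := rfl

lemma der_smul (c : K) (f : ℕ → R) : der (c • f) = c • der f := rfl

lemma covAux_add (P : R →ₗ[K] R) (b0 : K) :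
    ∀ (n : ℕ) (f g : ℕ → R), covAux (K := K) P b0 n (f + g)
      = covAux (K := K) P b0 n f + covAux (K := K) P b0 n g
  | 0, f, g => by simp [covAux]
  | n + 1, f, g => by
    simp only [covAux, der_add, covAux_add P b0 n, smul_add]
    abel

lemma covAux_smul (P : R →ₗ[K] R) (b0 : K) :
    ∀ (n : ℕ) (c : K) (f : ℕ → R), covAux (K := K) P b0 n (c • f)
      = c • covAux (K := K) P b0 n f
  | 0, c, f => by simp [covAux]
  | n + 1, c, f => by
    simp only [covAux, der_smul, covAux_smul P b0 n, smul_add]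
    rw [smul_comm]

def Pt (P : R →ₗ[K] R) (b0 : K) (f : ℕ → R) : ℕ → R :=
  fun m => covAux (K := K) P b0 m f

lemma der_Pt (P : R →ₗ[K] R) (b0 : K) (f : ℕ → R) :
    der (Pt P b0 f) = b0 • Pt P b0 f + Pt P b0 (der f) := rfl

lemma main_rb (P : R →ₗ[K] R) (b0 : K)
    (hP : ∀ x y : R, P x * P y = P (P x * y) + P (x * P y)) :
    ∀ (n : ℕ) (f g : ℕ → R),
      hmul0 (Pt P b0 f) (Pt P b0 g) n
        = covAux (K := K) P b0 n (hmul0 (Pt P b0 f) g)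
          + covAux (K := K) P b0 n (hmul0 f (Pt P b0 g))
  | 0, f, g => by
    simp only [hmul0, covAux, Pt, zero_add, Finset.sum_range_one, Nat.choose_zero_right,
      one_smul, Nat.sub_zero]
    exact hP (f 0) (g 0)
  | n + 1, f, g => by
    have IH1 := main_rb P b0 hP n f g
    have IH2 := main_rb P b0 hP n (der f) g
    have IH3 := main_rb P b0 hP n f (der g)
    have lhs : hmul0 (Pt P b0 f) (Pt P b0 g) (n + 1)
        = b0 • hmul0 (Pt P b0 f) (Pt P b0 g) n
          + hmul0 (Pt P b0 (der f)) (Pt P b0 g) n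
          + (b0 • hmul0 (Pt P b0 f) (Pt P b0 g) n
          + hmul0 (Pt P b0 f) (Pt P b0 (der g)) n) := by
      rw [hmul0_leibniz, der_Pt, der_Pt, hmul0_add_left, hmul0_add_right,
        hmul0_smul_left, hmul0_smul_right]
      rfl
    have r1 : covAux (K := K) P b0 (n + 1) (hmul0 (Pt P b0 f) g)
        = b0 • covAux (K := K) P b0 n (hmul0 (Pt P b0 f) g)
          + (b0 • covAux (K := K) P b0 n (hmul0 (Pt P b0 f) g)
            + covAux (K := K) P b0 n (hmul0 (Pt P b0 (der f)) g)
            + covAux (K := K) P b0 n (hmul0 (Pt P b0 f) (der g))) := by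
      show b0 • covAux (K := K) P b0 n (hmul0 (Pt P b0 f) g)
          + covAux (K := K) P b0 n (der (hmul0 (Pt P b0 f) g)) = _
      rw [der_hmul0, der_Pt, hmul0_add_left, hmul0_smul_left, covAux_add, covAux_add,
        covAux_smul]
    have r2 : covAux (K := K) P b0 (n + 1) (hmul0 f (Pt P b0 g))
        = b0 • covAux (K := K) P b0 n (hmul0 f (Pt P b0 g))
          + (covAux (K := K) P b0 n (hmul0 (der f) (Pt P b0 g))
            + (b0 • covAux (K := K) P b0 n (hmul0 f (Pt P b0 g))
              + covAux (K := K) P b0 n (hmul0 f (Pt P b0 (der g))))) := by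
      show b0 • covAux (K := K) P b0 n (hmul0 f (Pt P b0 g))
          + covAux (K := K) P b0 n (der (hmul0 f (Pt P b0 g))) = _
      rw [der_hmul0, der_Pt, hmul0_add_right, hmul0_smul_right, covAux_add, covAux_add,
        covAux_smul]
    rw [lhs, r1, r2, IH1, IH2, IH3]
    module

end Aux

/-- If (R,P) is a Rota-Baxter algebra of weight 0, the recursively defined cover P̃
is a Rota-Baxter operator of weight 0 on the weight-0 Hurwitz series algebra,
and satisfies ∂P̃ = b_0 P̃ + P̃∂. -/
theorem stmt12 {K R : Type*} [CommRing K] [CommRing R] [Algebra K R]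
    (P : R →ₗ[K] R) (b0 : K)
    (hP : ∀ x y : R, P x * P y = P (P x * y) + P (x * P y)) :
    (∀ f g : ℕ → R,
      hmul0 (fun n => covAux (K := K) P b0 n f) (fun n => covAux (K := K) P b0 n g)
        = (fun n => covAux (K := K) P b0 n (hmul0 (fun m => covAux (K := K) P b0 m f) g))
          + (fun n => covAux (K := K) P b0 n (hmul0 f (fun m => covAux (K := K) P b0 m g)))) ∧
    (∀ (f : ℕ → R) (n : ℕ),
      der (fun m => covAux (K := K) P b0 m f) n
        = b0 • covAux (K := K) P b0 n f + covAux (K := K) P b0 n (der f)) := by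
  constructor
  · intro f g
    funext n
    exact main_rb P b0 hP n f g
  · intro f n
    rfl
end

section
/- Let k be an integral domain of characteristic 0 and r ≥ 1, a_0,...,a_r ∈ k with a_r ≠ 0. Set φ(x) = Σ a_i x^i and let (R, P) be the Rota-Baxter algebra of weight 0 with R the quotient of the divided power algebra (basis z_0,z_1 with z_0 identity, z_1² = 0, z_i = 0 for i ≥ 2) and P(z_0) = z_1, P(z_1) = 0. Let P̃ be the unique cover of P on R^ℕ (weight-0 Hurwitz product) satisfying ∂P̃ = φ(∂), i.e., P̃(f)_0 = P(f_0) and P̃(f)_{n+1} = Σ_{i=0}^{r} a_i f_{n+i}. Then P̃ is not a Rota-Baxter operator of weight 0 on R^ℕ. -/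
open Finset

/-- The Rota-Baxter operator of weight 0 on the truncated divided power algebra
K[z₁]/(z₁²) (dual numbers): P(z_0) = z_1, P(z_1) = 0, i.e. P(a + b z₁) = a z₁. -/
def Ptrunc {K : Type*} [CommRing K] (x : DualNumber K) : DualNumber K :=
  TrivSqZeroExt.inr x.fst

/-- The cover P̃ of P determined by P̃(f)_0 = P(f_0) and
P̃(f)_{n+1} = Σ_{i=0}^{r} a_i f_{n+i} (i.e. ∂P̃ = φ(∂) for φ = Σ a_i x^i). -/
def cov15 {K : Type*} [CommRing K] (a : ℕ → K) (r : ℕ)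
    (f : ℕ → DualNumber K) : ℕ → DualNumber K :=
  fun n => if n = 0 then Ptrunc (f 0) else ∑ i ∈ range (r + 1), a i • f (n - 1 + i)

/-- For K a domain of characteristic 0, r ≥ 1 and a_r ≠ 0, the cover P̃ with
∂P̃ = φ(∂), φ = Σ_{i=0}^r a_i x^i, of the Rota-Baxter operator P on the truncated
divided power algebra is not a Rota-Baxter operator of weight 0 on R^ℕ. -/
theorem stmt15 {K : Type*} [CommRing K] [IsDomain K] [CharZero K]
    (r : ℕ) (hr : 1 ≤ r) (a : ℕ → K) (har : a r ≠ 0) :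
    ¬ (∀ f g : ℕ → DualNumber K,
        hmul0 (cov15 a r f) (cov15 a r g)
          = cov15 a r (hmul0 (cov15 a r f) g) + cov15 a r (hmul0 f (cov15 a r g))) := by
  intro h
  set f : ℕ → DualNumber K := fun n => if n = r then 1 else 0 with hf
  set F : ℕ → DualNumber K := cov15 a r f with hFdef
  have hr0 : (0 : ℕ) ≠ r := by omega
  have hF0 : F 0 = 0 := by
    simp [hFdef, cov15, hf, Ptrunc, hr0]
  have hF1 : F 1 = a r • 1 := by
    rw [hFdef]
    simp only [cov15, if_neg one_ne_zero]
    rw [Finset.sum_eq_single r]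
    · simp [hf]
    · intro b hb hbr
      simp [hf, hbr]
    · intro hmem
      exact absurd (Finset.self_mem_range_succ r) hmem
  -- values of hmul0 F f
  have hHlow : ∀ i, i < r → hmul0 F f (1 + i) = 0 := by
    intro i hi
    apply Finset.sum_eq_zero
    intro j hj
    simp only [Finset.mem_range] at hj
    rcases eq_or_ne j r with he | hjr
    · have h1 : 1 + i - r = 0 := by omega
      simp [hf, he, h1, hF0]
    · simp [hf, hjr]
  have hHr1 : hmul0 F f (1 + r) = (r + 1) • F 1 := by
    unfold hmul0
    rw [Finset.sum_eq_single r]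
    · have h1 : 1 + r - r = 1 := by omega
      have h2 : (1 + r).choose r = r + 1 := by
        rw [add_comm 1 r]; exact Nat.choose_succ_self_right r
      simp [hf, h1, h2]
    · intro b hb hbr; simp [hf, hbr]
    · intro hmem
      exact absurd (Finset.mem_range.mpr (by omega)) hmem
  -- values of hmul0 f F
  have hH'low : ∀ i, i < r → hmul0 f F (1 + i) = 0 := by
    intro i hi
    apply Finset.sum_eq_zero
    intro j hj
    simp only [Finset.mem_range] at hj
    rcases eq_or_ne (1 + i - j) r with he | hne
    · have hj0 : j = 0 := by omega
      subst hj0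
      simp [hf, he, hF0]
    · simp [hf, hne]
  have hH'r1 : hmul0 f F (1 + r) = (r + 1) • F 1 := by
    unfold hmul0
    rw [Finset.sum_eq_single 1]
    · have h1 : 1 + r - 1 = r := by omega
      simp [hf, h1, Nat.choose_one_right, add_comm 1 r]
    · intro b hb hbr
      have : 1 + r - b ≠ r := by
        simp only [Finset.mem_range] at hb; omega
      simp [hf, this]
    · intro hmem
      exact absurd (Finset.mem_range.mpr (by omega)) hmem
  -- the two cov15 values at index 2
  have hc1 : cov15 a r (hmul0 F f) 2 = a r • ((r + 1) • F 1) := by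
    simp only [cov15, if_neg (two_ne_zero)]
    rw [Finset.sum_eq_single r]
    · rw [show (2 : ℕ) - 1 + r = 1 + r by omega, hHr1]
    · intro b hb hbr
      simp only [Finset.mem_range] at hb
      rw [show (2 : ℕ) - 1 + b = 1 + b by omega, hHlow b (by omega), smul_zero]
    · intro hmem
      exact absurd (Finset.self_mem_range_succ r) hmem
  have hc2 : cov15 a r (hmul0 f F) 2 = a r • ((r + 1) • F 1) := by
    simp only [cov15, if_neg (two_ne_zero)]
    rw [Finset.sum_eq_single r]
    · rw [show (2 : ℕ) - 1 + r = 1 + r by omega, hH'r1]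
    · intro b hb hbr
      simp only [Finset.mem_range] at hb
      rw [show (2 : ℕ) - 1 + b = 1 + b by omega, hH'low b (by omega), smul_zero]
    · intro hmem
      exact absurd (Finset.self_mem_range_succ r) hmem
  -- LHS at index 2
  have hlhs : hmul0 F F 2 = 2 • (F 1 * F 1) := by
    unfold hmul0
    rw [Finset.sum_range_succ, Finset.sum_range_succ, Finset.sum_range_succ,
      Finset.sum_range_zero]
    simp [hF0]
  have h2 := congrFun (h f f) 2
  rw [← hFdef] at h2
  rw [Pi.add_apply, hc1, hc2, hlhs, hF1] at h2
  -- pass to the scalar part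
  have h3 := congrArg TrivSqZeroExt.fst h2
  simp only [TrivSqZeroExt.fst_add, TrivSqZeroExt.fst_smul, TrivSqZeroExt.fst_mul,
    TrivSqZeroExt.fst_one, mul_one] at h3
  simp only [smul_eq_mul, nsmul_eq_mul] at h3
  push_cast at h3
  have hK : (2 : K) * (r : K) * (a r * a r) = 0 := by linear_combination -h3
  have : (2 : K) * (r : K) * (a r * a r) ≠ 0 := by
    refine mul_ne_zero (mul_ne_zero two_ne_zero ?_) (mul_ne_zero har har)
    exact_mod_cast Nat.cast_ne_zero.mpr (by omega)
  exact this hK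
end
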